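/- arXiv:1504.00960 — 3 statements merged into one kernel-verified Lean document; each statement's English description precedes it below -/
import Mathlib

section
/- Degeneracy limit of divided differences of an entire function. Let c : ℕ → ℂ satisfy ∑_m |c_m| r^m < ∞ for every r ≥ 0, set f(z) = ∑'_m c_m z^m, and for M ≥ 1 define f^{[M]}(x₀,…,x_M) = ∑'_N c_{M+N} h_N(x₀,…,x_M). Then for every M ≥ 1 and every ξ ∈ ℂ, the divided difference at M+1 coincident arguments satisfies f^{[M]}(ξ, ξ, …, ξ) = (1/M!) · f^{(M)}(ξ), where f^{(M)} denotes the M-th iterated complex derivative of f. -/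
/-- The complete homogeneous symmetric polynomial of degree `N` in the
variables `x 0, …, x (M-1)`: the sum of all monomials of total degree `N`. -/
noncomputable def hsym {R : Type*} [CommSemiring R] {M : ℕ} (N : ℕ) (x : Fin M → R) : R :=
  ∑ a ∈ Finset.Nat.antidiagonalTuple M N, ∏ i, x i ^ a i

private lemma antidiagonalTuple_length :
    ∀ (k n : ℕ), (List.Nat.antidiagonalTuple k n).length = Nat.multichoose k n := by
  intro k
  induction k with
  | zero =>
    intro n
    cases n <;> simp [List.Nat.antidiagonalTuple]
  | succ k ih =>
    intro n
    induction n with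
    | zero =>
      simp [List.Nat.antidiagonalTuple, List.Nat.antidiagonal, Function.comp_def, ih]
    | succ n ihn =>
      have key : ∀ m : ℕ, (List.Nat.antidiagonalTuple (k+1) m).length
          = ((List.range (m+1)).map fun i => Nat.multichoose k (m - i)).sum := by
        intro m
        simp [List.Nat.antidiagonalTuple, List.Nat.antidiagonal, List.length_flatMap,
          List.map_map, Function.comp_def, ih]
      rw [key, Nat.multichoose_succ_succ, ← ihn, key]
      rw [List.range_succ_eq_map]
      simp [List.map_map, Function.comp_def]

private lemma card_antidiagonalTuple (k n : ℕ) :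
    (Finset.Nat.antidiagonalTuple k n).card = Nat.multichoose k n :=
  antidiagonalTuple_length k n

private lemma hsym_const (M N : ℕ) (ξ : ℂ) :
    hsym N (fun _ : Fin (M+1) => ξ) = ((M + N).choose N : ℂ) * ξ ^ N := by
  unfold hsym
  have h : ∀ a ∈ Finset.Nat.antidiagonalTuple (M+1) N,
      (∏ i : Fin (M+1), ξ ^ a i) = ξ ^ N := by
    intro a ha
    rw [Finset.prod_pow_eq_pow_sum, (Finset.Nat.mem_antidiagonalTuple).1 ha]
  rw [Finset.sum_congr rfl h, Finset.sum_const, card_antidiagonalTuple,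
    Nat.multichoose_eq, nsmul_eq_mul, show M + 1 + N - 1 = M + N from by omega]

private def Dc (c : ℕ → ℂ) : ℕ → ℂ := fun m => ((m : ℂ) + 1) * c (m + 1)

set_option maxHeartbeats 1000000 in
private lemma summable_Dc {c : ℕ → ℂ}
    (hc : ∀ r : ℝ, 0 ≤ r → Summable fun m : ℕ => ‖c m‖ * r ^ m) :
    ∀ r : ℝ, 0 ≤ r → Summable fun m : ℕ => ‖Dc c m‖ * r ^ m := by
  intro r hr
  set R : ℝ := max r 1 with hRdef
  have hR1 : (1:ℝ) ≤ R := le_max_right _ _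
  have hrR : r ≤ R := le_max_left _ _
  have h2R : (0:ℝ) ≤ 2 * R := by positivity
  have hs : Summable fun m : ℕ => ‖c (m + 1)‖ * (2 * R) ^ (m + 1) :=
    (summable_nat_add_iff 1).2 (hc (2 * R) h2R)
  refine hs.of_nonneg_of_le (fun m => by positivity) (fun m => ?_)
  have hnorm : ‖Dc c m‖ = ((m : ℝ) + 1) * ‖c (m + 1)‖ := by
    have hD : Dc c m = ((m + 1 : ℕ) : ℂ) * c (m + 1) := by
      unfold Dc; push_cast; ring
    rw [hD, norm_mul, Complex.norm_natCast]
    push_cast; ring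
  rw [hnorm]
  have h1 : r ^ m ≤ R ^ m := pow_le_pow_left₀ hr hrR m
  have h2n : m + 1 ≤ 2 ^ (m + 1) :=
    (Nat.succ_le_of_lt (Nat.lt_two_pow_self (n := m))).trans
      (Nat.pow_le_pow_right (by norm_num) (by omega))
  have h2 : (m : ℝ) + 1 ≤ 2 ^ (m + 1) := by exact_mod_cast h2n
  have h3 : R ^ m ≤ R ^ (m + 1) := pow_le_pow_right₀ hR1 (by omega)
  have hc1 : (0:ℝ) ≤ ‖c (m+1)‖ := norm_nonneg _
  have hRm : (0:ℝ) ≤ R ^ m := by positivity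
  have key : ((m : ℝ) + 1) * ‖c (m + 1)‖ * r ^ m
      ≤ (2:ℝ) ^ (m+1) * ‖c (m + 1)‖ * R ^ (m+1) := by
    gcongr
    exact h1.trans h3
  have keq : (2:ℝ) ^ (m+1) * ‖c (m + 1)‖ * R ^ (m+1) = ‖c (m + 1)‖ * (2 * R) ^ (m + 1) := by
    rw [mul_pow]; ring
  exact key.trans_eq keq

private lemma summable_pt {c : ℕ → ℂ}
    (hc : ∀ r : ℝ, 0 ≤ r → Summable fun m : ℕ => ‖c m‖ * r ^ m) (z : ℂ) :
    Summable fun m : ℕ => c m * z ^ m := by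
  refine Summable.of_norm ?_
  have := hc ‖z‖ (norm_nonneg z)
  refine this.congr fun m => ?_
  rw [norm_mul, norm_pow]

set_option maxHeartbeats 1000000 in
private lemma hasDerivAt_F {c : ℕ → ℂ}
    (hc : ∀ r : ℝ, 0 ≤ r → Summable fun m : ℕ => ‖c m‖ * r ^ m) (z : ℂ) :
    HasDerivAt (fun w : ℂ => ∑' m : ℕ, c m * w ^ m)
      (∑' n : ℕ, c n * ((n : ℂ) * z ^ (n - 1))) z := by
  set R : ℝ := ‖z‖ + 1 with hRdef
  have hR1 : (1:ℝ) ≤ R := by have := norm_nonneg z; rw [hRdef]; linarith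
  have hR0 : (0:ℝ) < R := by positivity
  have hzR : z ∈ Metric.ball (0:ℂ) R := by
    simp [hRdef]
  have hu : Summable fun n : ℕ => (n : ℝ) * ‖c n‖ * R ^ (n - 1) := by
    have hs : Summable fun n : ℕ => ‖c n‖ * (2 * R) ^ n := hc (2 * R) (by positivity)
    refine hs.of_nonneg_of_le (fun n => by positivity) (fun n => ?_)
    have h2n : (n : ℝ) ≤ 2 ^ n := by
      exact_mod_cast (Nat.lt_two_pow_self (n := n)).le
    have h3 : R ^ (n - 1) ≤ R ^ n := pow_le_pow_right₀ hR1 (by omega)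
    have key : (n : ℝ) * ‖c n‖ * R ^ (n-1) ≤ (2:ℝ) ^ n * ‖c n‖ * R ^ n := by
      gcongr
    have keq : (2:ℝ) ^ n * ‖c n‖ * R ^ n = ‖c n‖ * (2 * R) ^ n := by
      rw [mul_pow]; ring
    exact key.trans_eq keq
  refine hasDerivAt_tsum_of_isPreconnected hu Metric.isOpen_ball
    ((convex_ball (0:ℂ) R).isPreconnected) (fun n y _ => (hasDerivAt_pow n y).const_mul (c n))
    (fun n y hy => ?_) hzR (summable_pt hc z) hzR
  rw [Metric.mem_ball, dist_zero_right] at hy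
  rw [norm_mul, norm_mul, norm_pow]
  have h1 : ‖y‖ ^ (n-1) ≤ R ^ (n-1) := pow_le_pow_left₀ (norm_nonneg _) hy.le _
  have h2 : ‖(n : ℂ)‖ = (n : ℝ) := by simp
  rw [h2]
  calc ‖c n‖ * ((n:ℝ) * ‖y‖ ^ (n-1)) ≤ ‖c n‖ * ((n:ℝ) * R ^ (n-1)) := by gcongr
    _ = (n : ℝ) * ‖c n‖ * R ^ (n-1) := by ring

private lemma deriv_F {c : ℕ → ℂ}
    (hc : ∀ r : ℝ, 0 ≤ r → Summable fun m : ℕ => ‖c m‖ * r ^ m) :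
    deriv (fun w : ℂ => ∑' m : ℕ, c m * w ^ m)
      = fun z : ℂ => ∑' m : ℕ, Dc c m * z ^ m := by
  funext z
  rw [(hasDerivAt_F hc z).deriv]
  have hsD : Summable fun m : ℕ => Dc c m * z ^ m := summable_pt (summable_Dc hc) z
  have hshift : (fun n : ℕ => c (n+1) * (((n+1 : ℕ) : ℂ) * z ^ n)) = fun n : ℕ => Dc c n * z ^ n := by
    funext n
    unfold Dc
    push_cast
    ring
  have hsf : Summable fun n : ℕ => c n * ((n : ℂ) * z ^ (n - 1)) := by
    refine (summable_nat_add_iff 1).1 ?_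
    refine hsD.congr fun n => ?_
    simp only [Nat.add_sub_cancel]
    unfold Dc; push_cast; ring
  rw [Summable.tsum_eq_zero_add hsf]
  simp only [Nat.cast_zero, zero_mul, mul_zero, zero_add]
  refine tsum_congr fun n => ?_
  simp only [Nat.add_sub_cancel]
  unfold Dc; push_cast; ring

private lemma iteratedDeriv_F (M : ℕ) : ∀ (c : ℕ → ℂ),
    (∀ r : ℝ, 0 ≤ r → Summable fun m : ℕ => ‖c m‖ * r ^ m) →
    iteratedDeriv M (fun z : ℂ => ∑' m : ℕ, c m * z ^ m)
      = fun z : ℂ => ∑' m : ℕ, (Dc^[M] c) m * z ^ m := by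
  induction M with
  | zero => intro c hc; simp
  | succ M ih =>
    intro c hc
    rw [iteratedDeriv_succ', deriv_F hc, ih (Dc c) (summable_Dc hc),
      Function.iterate_succ_apply]

private lemma iterate_Dc (M : ℕ) : ∀ (c : ℕ → ℂ) (m : ℕ),
    (Dc^[M] c) m = ((m + M).descFactorial M : ℂ) * c (m + M) := by
  induction M with
  | zero => intro c m; simp
  | succ M ih =>
    intro c m
    rw [Function.iterate_succ_apply, ih (Dc c) m]
    unfold Dc
    rw [show m + M + 1 = m + (M+1) by omega,
      show m + (M + 1) = (m + M) + 1 by omega,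
      Nat.succ_descFactorial_succ]
    push_cast
    ring

/-- **Degeneracy limit of divided differences of an entire function.**
Let `c : ℕ → ℂ` satisfy `∑_m |c_m| r^m < ∞` for every `r ≥ 0`, set
`f(z) = ∑'_m c_m z^m` and `f^{[M]}(x₀,…,x_M) = ∑'_N c_{M+N} h_N(x₀,…,x_M)`.
Then for every `M ≥ 1` and `ξ ∈ ℂ`,
`f^{[M]}(ξ, …, ξ) = (1/M!) · f^{(M)}(ξ)` (with `M+1` coincident arguments,
`f^{(M)}` being the `M`-th iterated complex derivative of `f`). -/
theorem dividedDifference_degenerate (c : ℕ → ℂ)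
    (hc : ∀ r : ℝ, 0 ≤ r → Summable fun m : ℕ => ‖c m‖ * r ^ m)
    (M : ℕ) (hM : 1 ≤ M) (ξ : ℂ) :
    (∑' N : ℕ, c (M + N) * hsym N (fun _ : Fin (M + 1) => ξ)) =
      (1 / (M.factorial : ℂ)) *
        iteratedDeriv M (fun z : ℂ => ∑' m : ℕ, c m * z ^ m) ξ := by
  rw [iteratedDeriv_F M c hc]
  rw [← tsum_mul_left]
  refine tsum_congr fun N => ?_
  rw [iterate_Dc M c N, hsym_const M N ξ]
  have hdesc : ((N + M).descFactorial M : ℂ)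
      = (M.factorial : ℂ) * ((M + N).choose N : ℂ) := by
    rw [Nat.descFactorial_eq_factorial_mul_choose]
    rw [show (N + M).choose M = (M + N).choose N by rw [Nat.add_comm]; exact Nat.choose_symm_add]
    push_cast
    ring
  rw [hdesc, show N + M = M + N by omega]
  have hfac : (M.factorial : ℂ) ≠ 0 := by
    exact_mod_cast M.factorial_ne_zero
  field_simp
end

section
/- Power-series definition of a Hermitian matrix function agrees with the spectral definition. Let ι be a finite type, A an ι×ι complex Hermitian matrix with spectral decomposition A = U · diag(λ₁,…,λ_n) · U*, where U is the unitary matrix of eigenvectors and λ_i the (real) eigenvalues of A, and let c : ℕ → ℂ satisfy ∑_m |c_m| r^m < ∞ for every r ≥ 0. Then the series ∑_m c_m A^m has sum (converging entrywise) equal to U · diag(f(λ₁),…,f(λ_n)) · U*, where f(x) = ∑'_m c_m x^m. -/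
open Matrix

/-- **Power-series definition of a Hermitian matrix function agrees with the
spectral definition.**  Let `A` be a Hermitian complex matrix with spectral
decomposition `A = U · diag(λ) · U*` (`U` unitary, `λ` real), and let
`c : ℕ → ℂ` satisfy `∑_m |c_m| r^m < ∞` for every `r ≥ 0`.  Then the series
`∑_m c_m A^m` converges entrywise to `U · diag(f(λ₁),…,f(λ_n)) · U*`, where
`f(x) = ∑'_m c_m x^m`. -/
theorem matrixFunction_powerSeries_eq_spectral {ι : Type*} [Fintype ι] [DecidableEq ι]
    (A U : Matrix ι ι ℂ) (hA : A.IsHermitian) (hU : U ∈ Matrix.unitaryGroup ι ℂ)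
    (lam : ι → ℝ)
    (hspec : A = U * Matrix.diagonal (fun i => (lam i : ℂ)) * Uᴴ)
    (c : ℕ → ℂ) (hc : ∀ r : ℝ, 0 ≤ r → Summable fun m : ℕ => ‖c m‖ * r ^ m)
    (I J : ι) :
    HasSum (fun m : ℕ => c m * (A ^ m) I J)
      ((U * Matrix.diagonal (fun i => ∑' m : ℕ, c m * (lam i : ℂ) ^ m) * Uᴴ) I J) := by
  have hUU : Uᴴ * U = 1 := by
    have := (Matrix.mem_unitaryGroup_iff'.mp hU)
    simpa [Matrix.star_eq_conjTranspose] using this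
  have hpow : ∀ m : ℕ, A ^ m = U * Matrix.diagonal (fun i => (lam i : ℂ) ^ m) * Uᴴ := by
    intro m
    induction m with
    | zero =>
      simp only [pow_zero, Matrix.diagonal_one, Matrix.mul_one]
      have := (Matrix.mem_unitaryGroup_iff.mp hU)
      simpa [Matrix.star_eq_conjTranspose] using this.symm
    | succ n ih =>
      rw [pow_succ, ih, hspec]
      calc U * Matrix.diagonal (fun i => (lam i : ℂ) ^ n) * Uᴴ *
            (U * Matrix.diagonal (fun i => (lam i : ℂ)) * Uᴴ)
          = U * Matrix.diagonal (fun i => (lam i : ℂ) ^ n) * (Uᴴ * U) *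
            Matrix.diagonal (fun i => (lam i : ℂ)) * Uᴴ := by
            simp only [Matrix.mul_assoc]
        _ = U * (Matrix.diagonal (fun i => (lam i : ℂ) ^ n) *
            Matrix.diagonal (fun i => (lam i : ℂ))) * Uᴴ := by
            rw [hUU]; simp [Matrix.mul_assoc]
        _ = U * Matrix.diagonal (fun i => (lam i : ℂ) ^ (n + 1)) * Uᴴ := by
            rw [Matrix.diagonal_mul_diagonal]
            simp [pow_succ]
  have hentry : ∀ (d : ι → ℂ), (U * Matrix.diagonal d * Uᴴ) I J
      = ∑ i, U I i * (starRingEnd ℂ) (U J i) * d i := by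
    intro d
    simp [Matrix.mul_apply, Matrix.diagonal, Matrix.conjTranspose_apply, Finset.mul_sum]
    congr 1; ext i
    ring
  have hsummand : (fun m : ℕ => c m * (A ^ m) I J)
      = fun m => ∑ i, U I i * (starRingEnd ℂ) (U J i) * (c m * (lam i : ℂ) ^ m) := by
    funext m
    rw [hpow m, hentry]
    rw [Finset.mul_sum]
    congr 1; ext i; ring
  rw [hsummand, hentry]
  refine hasSum_sum fun i _ => ?_
  refine HasSum.mul_left _ ?_
  refine (Summable.hasSum ?_)
  refine Summable.of_norm ?_
  have := hc ‖(lam i : ℂ)‖ (norm_nonneg _)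
  simpa [norm_mul, norm_pow] using this
end

section
/- Bound on the M-th order term of the flavour expansion of a master one-loop integral. Let ι be a finite type, let D : ι → ℝ take positive values, let Â be an ι×ι complex Hermitian matrix with zero diagonal, let p ≥ 2 and let b₁,…,b_p be positive reals. Define the mass-insertion matrix Q by Q_{IJ} = |Â_{IJ}| / √(D_I · D_J). Then for every M ≥ 1 and all indices I, J: ∑_{K₁,…,K_{M−1} ∈ ι} J_{M+1+p}(D_I, D_J, D_{K₁}, …, D_{K_{M−1}}, b₁,…,b_p) · |Â_{IK₁}| · |Â_{K₁K₂}| ⋯ |Â_{K_{M−1}J}| ≤ J_{1+p}(D_I, b₁,…,b_p) · √(D_I / D_J) · (Q^M)_{IJ}, where (Q^M)_{IJ} is the (I,J) entry of the M-th power of the matrix Q. -/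
open Matrix

/-- The zero-momentum master one-loop integral
`Jₙ(a₁,…,a_n) = ∫₀^∞ u / ∏_{j=1}^n (u + a_j) du`. -/
noncomputable def Jint {n : ℕ} (a : Fin n → ℝ) : ℝ :=
  ∫ u in Set.Ioi (0 : ℝ), u / ∏ j, (u + a j)

/-- The product of matrix entries of `B` along the chain
`I → K 0 → K 1 → ⋯ → K (m-1) → J` (for `m = 0` it is just `B I J`). -/
def pathProd {R : Type*} [CommMonoid R] {ι : Type*} (B : Matrix ι ι R) (I J : ι)
    {m : ℕ} (K : Fin m → ι) : R :=
  let nodes : Fin (m + 2) → ι := Fin.cons I (Fin.snoc K J)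
  ∏ i : Fin (m + 1), B (nodes i.castSucc) (nodes i.succ)

open MeasureTheory Set in
lemma integrable_inv_sq_shift {c : ℝ} (hc : 0 < c) :
    IntegrableOn (fun u : ℝ => ((u + c) ^ 2)⁻¹) (Ioi 0) := by
  have hderiv : ∀ x ∈ Ici (0:ℝ), HasDerivAt (fun u : ℝ => -(u + c)⁻¹)
      (((x + c) ^ 2)⁻¹) x := by
    intro x hx
    have hx0 : (0:ℝ) ≤ x := hx
    have hxc : x + c ≠ 0 := by positivity
    have h1 : HasDerivAt (fun u : ℝ => u + c) 1 x :=
      (hasDerivAt_id x).add_const c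
    have := ((h1.inv hxc).neg : HasDerivAt (fun u : ℝ => -(u + c)⁻¹) _ x)
    rw [show ((x + c) ^ 2)⁻¹ = -(-1 / (x + c) ^ 2) by ring]
    exact this
  have htend : Filter.Tendsto (fun u : ℝ => -(u + c)⁻¹) Filter.atTop (nhds 0) := by
    have : Filter.Tendsto (fun u : ℝ => (u + c)⁻¹) Filter.atTop (nhds 0) :=
      Filter.Tendsto.inv_tendsto_atTop (Filter.tendsto_atTop_add_const_right _ c Filter.tendsto_id)
    simpa using this.neg
  exact integrableOn_Ioi_deriv_of_nonneg' hderiv (fun x hx => by positivity) htend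

open MeasureTheory Set in
lemma integrableOn_master {n : ℕ} (hn : 3 ≤ n) (a : Fin n → ℝ) (ha : ∀ j, 0 < a j) :
    IntegrableOn (fun u : ℝ => u / ∏ j, (u + a j)) (Ioi 0) := by
  have hne : (Finset.univ : Finset (Fin n)).Nonempty :=
    ⟨⟨0, by omega⟩, Finset.mem_univ _⟩
  obtain ⟨j0, -, hj0⟩ := Finset.exists_min_image Finset.univ a hne
  set c := a j0 with hc
  have hc0 : 0 < c := ha j0
  have hmeas : AEStronglyMeasurable (fun u : ℝ => u / ∏ j, (u + a j))
      (volume.restrict (Ioi 0)) := by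
    apply Measurable.aestronglyMeasurable
    fun_prop
  refine Integrable.mono' (((integrable_inv_sq_shift hc0).const_mul ((c ^ (n - 3))⁻¹))) hmeas ?_
  filter_upwards [ae_restrict_mem measurableSet_Ioi] with u hu
  have hu0 : 0 < u := hu
  have hprod : (u + c) ^ 3 * c ^ (n - 3) ≤ ∏ j, (u + a j) := by
    calc (u + c) ^ 3 * c ^ (n - 3) ≤ (u + c) ^ 3 * (u + c) ^ (n - 3) :=
          mul_le_mul_of_nonneg_left (pow_le_pow_left₀ hc0.le (by linarith) _) (by positivity)
      _ = (u + c) ^ n := by rw [← pow_add]; congr 1; omega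
      _ = ∏ _j : Fin n, (u + c) := by simp
      _ ≤ ∏ j, (u + a j) := by
          apply Finset.prod_le_prod
          · intro j _; positivity
          · intro j _; have := hj0 j (Finset.mem_univ j); linarith
  have hnorm : ‖u / ∏ j, (u + a j)‖ = u / ∏ j, (u + a j) := by
    rw [Real.norm_eq_abs, abs_of_nonneg]
    apply div_nonneg hu0.le
    apply Finset.prod_nonneg
    intro j _; have := ha j; linarith
  rw [hnorm]
  calc u / ∏ j, (u + a j) ≤ u / ((u + c) ^ 3 * c ^ (n - 3)) := by
        gcongr
    _ ≤ (u + c) / ((u + c) ^ 3 * c ^ (n - 3)) := by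
        gcongr
        linarith
    _ = (c ^ (n - 3))⁻¹ * ((u + c) ^ 2)⁻¹ := by
        field_simp

lemma nodes_castSucc {ι : Type*} (I J : ι) {m : ℕ} (K : Fin m → ι) :
    (fun i : Fin (m + 1) => (Fin.cons I (Fin.snoc K J) : Fin (m+2) → ι) i.castSucc)
      = Fin.cons I K := by
  funext i
  induction i using Fin.cases with
  | zero => simp
  | succ j => rw [← Fin.succ_castSucc]; simp

lemma nodes_succ {ι : Type*} (I J : ι) {m : ℕ} (K : Fin m → ι) :
    (fun i : Fin (m + 1) => (Fin.cons I (Fin.snoc K J) : Fin (m+2) → ι) i.succ)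
      = Fin.snoc K J := by
  funext i; simp

lemma pathProd_eq {R : Type*} [CommMonoid R] {ι : Type*} (B : Matrix ι ι R) (I J : ι)
    {m : ℕ} (K : Fin m → ι) :
    pathProd B I J K = ∏ i : Fin (m+1),
      B ((Fin.cons I K : Fin (m+1) → ι) i) ((Fin.snoc K J : Fin (m+1) → ι) i) := by
  refine Finset.prod_congr rfl fun i _ => ?_
  rw [congrFun (nodes_castSucc I J K) i, congrFun (nodes_succ I J K) i]

lemma pathProd_cons {R : Type*} [CommMonoid R] {ι : Type*} (B : Matrix ι ι R) (I J k : ι)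
    {m : ℕ} (K : Fin m → ι) :
    pathProd B I J (Fin.cons k K) = B I k * pathProd B k J K := by
  rw [pathProd_eq, pathProd_eq, Fin.prod_univ_succ]
  congr 1
  · rw [← Fin.cons_snoc_eq_snoc_cons]; simp

lemma pathProd_mul {R : Type*} [CommMonoid R] {ι : Type*} (B C : Matrix ι ι R) (I J : ι)
    {m : ℕ} (K : Fin m → ι) :
    pathProd (Matrix.of fun i j => B i j * C i j) I J K
      = pathProd B I J K * pathProd C I J K := by
  simp [pathProd_eq, Finset.prod_mul_distrib, Matrix.of_apply]

lemma pathProd_pow {ι : Type*} [Fintype ι] [DecidableEq ι] (Q : Matrix ι ι ℝ) (m : ℕ) (I J : ι) :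
    (Q ^ (m + 1)) I J = ∑ K : Fin m → ι, pathProd Q I J K := by
  induction m generalizing I with
  | zero =>
    rw [pow_one, Fintype.sum_unique]
    rw [pathProd_eq, Fin.prod_univ_one, Fin.cons_zero,
      show (0:Fin 1) = Fin.last 0 from rfl, Fin.snoc_last]
  | succ m ih =>
    calc (Q ^ (m+1+1)) I J = ∑ k, Q I k * (Q ^ (m+1)) k J := by
          rw [pow_succ', Matrix.mul_apply]
      _ = ∑ k, ∑ K : Fin m → ι, Q I k * pathProd Q k J K := by
          simp [ih, Finset.mul_sum]
      _ = ∑ k, ∑ K : Fin m → ι, pathProd Q I J (Fin.cons k K) := by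
          simp [pathProd_cons]
      _ = ∑ K : Fin (m+1) → ι, pathProd Q I J K := by
          rw [← Equiv.sum_comp (Fin.consEquiv fun _ => ι) (pathProd Q I J),
            Fintype.sum_prod_type]
          rfl

lemma pathProd_invsqrt {ι : Type*} (D : ι → ℝ) (hD : ∀ i, 0 < D i) (I J : ι)
    {m : ℕ} (K : Fin m → ι) :
    pathProd (Matrix.of fun i j => (Real.sqrt (D i * D j))⁻¹) I J K
      = (Real.sqrt (D I) * Real.sqrt (D J) * ∏ i, D (K i))⁻¹ := by
  rw [pathProd_eq]
  have h : ∀ i : Fin (m+1),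
      (Matrix.of fun i j => (Real.sqrt (D i * D j))⁻¹)
        ((Fin.cons I K : Fin (m+1) → ι) i) ((Fin.snoc K J : Fin (m+1) → ι) i)
      = (Real.sqrt (D ((Fin.cons I K : Fin (m+1) → ι) i)))⁻¹ *
        (Real.sqrt (D ((Fin.snoc K J : Fin (m+1) → ι) i)))⁻¹ := by
    intro i
    rw [Matrix.of_apply, Real.sqrt_mul (hD _).le, mul_inv]
  rw [Finset.prod_congr rfl (fun i _ => h i), Finset.prod_mul_distrib]
  have h1 : (fun i : Fin (m+1) => (Real.sqrt (D ((Fin.cons I K : Fin (m+1) → ι) i)))⁻¹)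
      = Fin.cons ((Real.sqrt (D I))⁻¹) (fun i => (Real.sqrt (D (K i)))⁻¹) := by
    rw [show (fun i : Fin (m+1) => (Real.sqrt (D ((Fin.cons I K : Fin (m+1) → ι) i)))⁻¹)
      = (fun x => (Real.sqrt (D x))⁻¹) ∘ Fin.cons I K from rfl, Fin.comp_cons]
    rfl
  have h2 : (fun i : Fin (m+1) => (Real.sqrt (D ((Fin.snoc K J : Fin (m+1) → ι) i)))⁻¹)
      = Fin.snoc (fun i => (Real.sqrt (D (K i)))⁻¹) ((Real.sqrt (D J))⁻¹) := by
    rw [show (fun i : Fin (m+1) => (Real.sqrt (D ((Fin.snoc K J : Fin (m+1) → ι) i)))⁻¹)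
      = (fun x => (Real.sqrt (D x))⁻¹) ∘ Fin.snoc K J from rfl, Fin.comp_snoc]
    rfl
  rw [h1, h2, Fin.prod_cons, Fin.prod_snoc]
  have hDK : ∏ i, D (K i) = (∏ i, Real.sqrt (D (K i))) * ∏ i, Real.sqrt (D (K i)) := by
    rw [← Finset.prod_mul_distrib]
    exact Finset.prod_congr rfl fun i _ => (Real.mul_self_sqrt (hD _).le).symm
  rw [hDK]
  rw [Finset.prod_inv_distrib]
  rw [mul_inv, mul_inv, mul_inv]
  ring

open MeasureTheory Set in
set_option maxHeartbeats 2000000 in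
/-- **Bound on the `M`-th order term of the flavour expansion of a master
one-loop integral.**  Let `D : ι → ℝ` be positive, `Â` a Hermitian matrix with
zero diagonal, `p ≥ 2` and `b₁,…,b_p > 0`, and let `Q` be the mass-insertion
matrix `Q_{IJ} = |Â_{IJ}| / √(D_I D_J)`.  Then for every `M = m + 1 ≥ 1` and
all `I, J`:
`∑_{K₁,…,K_{M−1}} J_{M+1+p}(D_I, D_J, D_{K₁},…,D_{K_{M−1}}, b₁,…,b_p)
   · |Â_{IK₁}| ⋯ |Â_{K_{M−1}J}|
 ≤ J_{1+p}(D_I, b₁,…,b_p) · √(D_I / D_J) · (Q^M)_{IJ}`. -/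
theorem masterIntegral_term_bound {ι : Type*} [Fintype ι] [DecidableEq ι]
    (D : ι → ℝ) (hD : ∀ i, 0 < D i)
    (Ahat : Matrix ι ι ℂ) (hH : Ahat.IsHermitian) (hdiag : ∀ i, Ahat i i = 0)
    (p : ℕ) (hp : 2 ≤ p) (b : Fin p → ℝ) (hb : ∀ j, 0 < b j)
    (m : ℕ) (I J : ι) :
    ∑ K : Fin m → ι,
        Jint (Fin.append (Fin.cons (D I) (Fin.cons (D J) (fun i => D (K i)))) b) *
          pathProd (Matrix.of fun i j => ‖Ahat i j‖) I J K ≤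
      Jint (Fin.cons (D I) b) * Real.sqrt (D I / D J) *
        ((Matrix.of fun i j => ‖Ahat i j‖ / Real.sqrt (D i * D j)) ^ (m + 1) : Matrix ι ι ℝ) I J := by
  have hQsplit : (Matrix.of fun i j => ‖Ahat i j‖ / Real.sqrt (D i * D j))
      = Matrix.of fun i j =>
        (Matrix.of fun i j => (‖Ahat i j‖ : ℝ)) i j *
        ((Matrix.of fun i j => (Real.sqrt (D i * D j))⁻¹) i j) := by
    ext i j
    simp [div_eq_mul_inv]
  rw [pathProd_pow, Finset.mul_sum]
  apply Finset.sum_le_sum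
  intro K _
  have hPA : 0 ≤ pathProd (Matrix.of fun i j => (‖Ahat i j‖ : ℝ)) I J K := by
    rw [pathProd_eq]
    apply Finset.prod_nonneg
    intro i _
    simp only [Matrix.of_apply]
    positivity
  have hPQ : pathProd (Matrix.of fun i j => ‖Ahat i j‖ / Real.sqrt (D i * D j)) I J K
      = pathProd (Matrix.of fun i j => (‖Ahat i j‖ : ℝ)) I J K *
        (Real.sqrt (D I) * Real.sqrt (D J) * ∏ i, D (K i))⁻¹ := by
    rw [hQsplit, pathProd_mul, pathProd_invsqrt D hD]
  -- positivity of entries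
  have haL : ∀ j, 0 < Fin.append (Fin.cons (D I) (Fin.cons (D J) (fun i => D (K i)))) b j := by
    intro j
    refine Fin.addCases (fun i => ?_) (fun i => ?_) j
    · rw [Fin.append_left]
      refine Fin.cases ?_ (fun i2 => ?_) i
      · simpa using hD I
      · rw [Fin.cons_succ]
        refine Fin.cases ?_ (fun i3 => ?_) i2
        · simpa using hD J
        · rw [Fin.cons_succ]; exact hD _
    · rw [Fin.append_right]; exact hb i
  have haS : ∀ j : Fin (p+1), 0 < (Fin.cons (D I) b : Fin (p+1) → ℝ) j := by
    intro j
    refine Fin.cases ?_ (fun i => ?_) j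
    · simpa using hD I
    · rw [Fin.cons_succ]; exact hb i
  have hlong : IntegrableOn
      (fun u : ℝ => u / ∏ j, (u + Fin.append (Fin.cons (D I) (Fin.cons (D J) (fun i => D (K i)))) b j))
      (Ioi 0) := integrableOn_master (n := m+1+1+p) (by omega) _ haL
  have hshort : IntegrableOn (fun u : ℝ => u / ∏ j, (u + (Fin.cons (D I) b : Fin (p+1) → ℝ) j)) (Ioi 0) :=
    integrableOn_master (n := p+1) (by omega) _ haS
  set P := ∏ i, D (K i) with hP
  have hPpos : 0 < P := Finset.prod_pos fun i _ => hD _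
  -- the pointwise and integral bound
  have hsplit : ∀ u : ℝ,
      ∏ j, (u + Fin.append (Fin.cons (D I) (Fin.cons (D J) (fun i => D (K i)))) b j)
        = (u + D I) * ((u + D J) * ∏ i, (u + D (K i))) * ∏ j, (u + b j) := by
    intro u
    rw [Fin.prod_univ_add]
    simp [Fin.prod_univ_succ]
  have hkey : Jint (Fin.append (Fin.cons (D I) (Fin.cons (D J) (fun i => D (K i)))) b)
      ≤ (D J * P)⁻¹ * Jint (Fin.cons (D I) b) := by
    unfold Jint
    rw [← MeasureTheory.integral_const_mul]
    apply setIntegral_mono_on hlong (hshort.const_mul _) measurableSet_Ioi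
    intro x hx
    have hx0 : 0 < x := hx
    rw [hsplit x, inv_mul_eq_div, div_div]
    have hPK : P ≤ ∏ i, (x + D (K i)) := by
      rw [hP]
      apply Finset.prod_le_prod (fun i _ => (hD _).le) (fun i _ => by linarith)
    have h2 : D J * P ≤ (x + D J) * ∏ i, (x + D (K i)) :=
      mul_le_mul (by linarith) hPK hPpos.le (by have := hD J; positivity)
    have hS : ∏ j, (x + (Fin.cons (D I) b : Fin (p+1) → ℝ) j)
        = (x + D I) * ∏ j, (x + b j) := by
      simp [Fin.prod_univ_succ]
    have hBx : (0:ℝ) < ∏ j, (x + b j) :=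
      Finset.prod_pos fun j _ => by have := hb j; linarith
    have hDI : (0:ℝ) < x + D I := by have := hD I; linarith
    have h3 : (x + D I) * (∏ j, (x + b j)) * (D J * P)
        ≤ (x + D I) * ((x + D J) * ∏ i, (x + D (K i))) * ∏ j, (x + b j) := by
      calc (x + D I) * (∏ j, (x + b j)) * (D J * P)
          ≤ (x + D I) * (∏ j, (x + b j)) * ((x + D J) * ∏ i, (x + D (K i))) := by
            apply mul_le_mul_of_nonneg_left h2 (mul_pos hDI hBx).le
        _ = (x + D I) * ((x + D J) * ∏ i, (x + D (K i))) * ∏ j, (x + b j) := by ring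
    rw [hS]
    exact div_le_div_of_nonneg_left hx0.le (mul_pos (mul_pos hDI hBx) (mul_pos (hD J) hPpos)) h3
  -- coefficient algebra
  have hsI : (0:ℝ) < Real.sqrt (D I) := Real.sqrt_pos.2 (hD I)
  have hsJ : (0:ℝ) < Real.sqrt (D J) := Real.sqrt_pos.2 (hD J)
  have hcoef : Real.sqrt (D I / D J) * (Real.sqrt (D I) * Real.sqrt (D J) * P)⁻¹
      = (D J * P)⁻¹ := by
    rw [Real.sqrt_div (hD I).le,
      show D J * P = Real.sqrt (D J) * Real.sqrt (D J) * P from by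
        rw [Real.mul_self_sqrt (hD J).le]]
    field_simp
  calc Jint (Fin.append (Fin.cons (D I) (Fin.cons (D J) (fun i => D (K i)))) b) *
        pathProd (Matrix.of fun i j => (‖Ahat i j‖ : ℝ)) I J K
      ≤ ((D J * P)⁻¹ * Jint (Fin.cons (D I) b)) *
        pathProd (Matrix.of fun i j => (‖Ahat i j‖ : ℝ)) I J K := by
        apply mul_le_mul_of_nonneg_right hkey hPA
    _ = Jint (Fin.cons (D I) b) * Real.sqrt (D I / D J) *
        pathProd (Matrix.of fun i j => ‖Ahat i j‖ / Real.sqrt (D i * D j)) I J K := by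
        rw [hPQ, ← hcoef]
        ring
end
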